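/- (Point convergence.) Let P be a probability distribution on ℝ^d × ℝ^L supported on points z = (x, y) with ‖x‖₂ ≤ R, and such that 0 ≤ ⟨y, y'⟩ ≤ L̄ for any two points in the support. Fix a real symmetric positive semidefinite d×d matrix A*. Then for every n ≥ 2 and every δ ∈ (0,1), with probability at least 1 − δ over i.i.d. samples D = (z_1, …, z_n) from P, L̂(A*; D) − L(A*) ≤ 4(L̄² + ‖A*‖_F² R⁴) · √(log(1/δ)/(2n)). -/

import Mathlib

open MeasureTheory Finset
open scoped ENNReal

noncomputable section

/-- A labeled data point z = (x, y) ∈ ℝ^d × ℝ^L. -/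
abbrev Pt (d L : ℕ) := (Fin d → ℝ) × (Fin L → ℝ)

/-- Inner product ⟨y, y'⟩ of label vectors. -/
def ipY {L : ℕ} (y y' : Fin L → ℝ) : ℝ := ∑ i, y i * y' i

/-- Bilinear form xᵀ A x'. -/
def qForm {d : ℕ} (A : Matrix (Fin d) (Fin d) ℝ) (x x' : Fin d → ℝ) : ℝ :=
  ∑ i, ∑ j, x i * A i j * x' j

/-- Euclidean norm ‖x‖₂. -/
def norm2 {d : ℕ} (x : Fin d → ℝ) : ℝ := Real.sqrt (∑ i, x i ^ 2)

/-- Frobenius norm ‖A‖_F. -/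
def frobNorm {d : ℕ} (A : Matrix (Fin d) (Fin d) ℝ) : ℝ :=
  Real.sqrt (∑ i, ∑ j, (A i j) ^ 2)

/-- Loss ℓ(A; z, z') := g(⟨y, y'⟩)·(⟨y, y'⟩ − xᵀ A x')² + λ·Tr(A). -/
def lossFn {d L : ℕ} (g : ℝ → ℝ) (lam : ℝ) (A : Matrix (Fin d) (Fin d) ℝ)
    (z z' : Pt d L) : ℝ :=
  g (ipY z.2 z'.2) * (ipY z.2 z'.2 - qForm A z.1 z'.1) ^ 2 + lam * A.trace

/-- Empirical risk L̂(A; D) := (1/(n(n−1))) Σᵢ Σ_{j≠i} ℓ(A; zᵢ, zⱼ). -/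
def empRisk {d L : ℕ} (g : ℝ → ℝ) (lam : ℝ) {n : ℕ} (A : Matrix (Fin d) (Fin d) ℝ)
    (D : Fin n → Pt d L) : ℝ :=
  (1 / ((n : ℝ) * ((n : ℝ) - 1))) * ∑ i, ∑ j ∈ univ.erase i, lossFn g lam A (D i) (D j)

/-- Population risk L(A) := E_{z,z' i.i.d. ∼ P}[ℓ(A; z, z')]. -/
def popRisk {d L : ℕ} (g : ℝ → ℝ) (lam : ℝ) (P : Measure (Pt d L))
    (A : Matrix (Fin d) (Fin d) ℝ) : ℝ :=
  ∫ z, (∫ z', lossFn g lam A z z' ∂P) ∂P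

/-- Risk relative to the training set, L̃(A; D) := (1/n) Σₖ E_{z∼P}[ℓ(A; z, zₖ)]. -/
def tilRisk {d L : ℕ} (g : ℝ → ℝ) (lam : ℝ) (P : Measure (Pt d L)) {n : ℕ}
    (A : Matrix (Fin d) (Fin d) ℝ) (D : Fin n → Pt d L) : ℝ :=
  (1 / (n : ℝ)) * ∑ k, ∫ z, lossFn g lam A z (D k) ∂P

/-- Law of a Rademacher random variable: uniform on {−1, +1}. -/
def radMeasure : Measure ℝ :=
  (2⁻¹ : ℝ≥0∞) • Measure.dirac (-1) + (2⁻¹ : ℝ≥0∞) • Measure.dirac 1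


lemma hoeffding_key {p : ℝ} (hp0 : 0 ≤ p) (hp1 : p ≤ 1) (u : ℝ) :
    (1 - p) * Real.exp (-(p * u)) + p * Real.exp ((1 - p) * u) ≤ Real.exp (u ^ 2 / 8) := by
  set D : ℝ → ℝ := fun v => 1 - p + p * Real.exp v with hDdef
  have hD : ∀ v, 0 < D v := by
    intro v
    rcases eq_or_lt_of_le hp0 with h | h
    · simp [hDdef, ← h]
    · have := Real.exp_pos v
      have : 0 < p * Real.exp v := by positivity
      have h1p : 0 ≤ 1 - p := by linarith
      simp only [hDdef]; linarith
  have key : ∀ v, -(p * v) + Real.log (D v) ≤ v ^ 2 / 8 := by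
    set F : ℝ → ℝ := fun v => v ^ 2 / 8 + p * v - Real.log (D v) with hFdef
    set F' : ℝ → ℝ := fun v => v / 4 + p - p * Real.exp v / D v with hF'def
    have hDd : ∀ v, HasDerivAt D (p * Real.exp v) v := by
      intro v
      exact ((Real.hasDerivAt_exp v).const_mul p).const_add (1 - p)
    have hF : ∀ v, HasDerivAt F (F' v) v := by
      intro v
      have h1 : HasDerivAt (fun v : ℝ => v ^ 2 / 8 + p * v)
          (v / 4 + p) v := by
        have := ((hasDerivAt_pow 2 v).div_const 8).add ((hasDerivAt_id v).const_mul p)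
        exact this.congr_deriv (by ring)
      have h2 : HasDerivAt (fun v => Real.log (D v)) (p * Real.exp v / D v) v :=
        (hDd v).log (hD v).ne'
      exact h1.sub h2
    have hF' : ∀ v, HasDerivAt F' (1 / 4 - p * Real.exp v * (1 - p) / (D v) ^ 2) v := by
      intro v
      have h1 : HasDerivAt (fun v : ℝ => v / 4 + p) (1 / 4) v := by
        simpa using ((hasDerivAt_id v).div_const 4).add_const p
      have h2 : HasDerivAt (fun v => p * Real.exp v / D v)
          ((p * Real.exp v * D v - p * Real.exp v * (p * Real.exp v)) / (D v) ^ 2) v :=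
        ((Real.hasDerivAt_exp v).const_mul p).div (hDd v) (hD v).ne'
      have := h1.sub h2
      have hDv := (hD v).ne'
      have e : p * Real.exp v * (1 - p)
          = p * Real.exp v * D v - p * Real.exp v * (p * Real.exp v) := by
        simp only [hDdef]; ring
      rw [e]; exact this
    have hF''0 : ∀ v, 0 ≤ 1 / 4 - p * Real.exp v * (1 - p) / (D v) ^ 2 := by
      intro v
      rw [sub_nonneg, div_le_iff₀ (pow_pos (hD v) 2)]
      have h := sq_nonneg ((1 - p) - p * Real.exp v)
      simp only [hDdef]
      nlinarith [Real.exp_pos v]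
    have hF'mono : Monotone F' := by
      apply monotone_of_deriv_nonneg
      · exact fun v => (hF' v).differentiableAt
      · intro v; rw [(hF' v).deriv]; exact hF''0 v
    have hF'0 : F' 0 = 0 := by simp [hF'def, hDdef]
    have hF0 : F 0 = 0 := by simp [hFdef, hDdef]
    have hFnonneg : ∀ v, 0 ≤ F v := by
      intro v
      rcases le_total 0 v with h | h
      · have : MonotoneOn F (Set.Ici (0:ℝ)) := by
          apply monotoneOn_of_deriv_nonneg (convex_Ici 0)
          · exact (fun x _ => (hF x).differentiableAt.continuousAt.continuousWithinAt)
          · exact fun x _ => (hF x).differentiableAt.differentiableWithinAt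
          · intro x hx
            rw [(hF x).deriv]
            have : (0:ℝ) ≤ x := le_of_lt (by simpa using hx)
            have := hF'mono this
            rw [hF'0] at this
            exact this
        have := this (Set.mem_Ici.2 le_rfl) (Set.mem_Ici.2 h) h
        rwa [hF0] at this
      · have : AntitoneOn F (Set.Iic (0:ℝ)) := by
          apply antitoneOn_of_deriv_nonpos (convex_Iic 0)
          · exact (fun x _ => (hF x).differentiableAt.continuousAt.continuousWithinAt)
          · exact fun x _ => (hF x).differentiableAt.differentiableWithinAt
          · intro x hx
            rw [(hF x).deriv]
            have hx0 : x ≤ (0:ℝ) := le_of_lt (by simpa using hx)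
            have := hF'mono hx0
            rw [hF'0] at this
            exact this
        have := this (Set.mem_Iic.2 h) (Set.mem_Iic.2 le_rfl) h
        rwa [hF0] at this
    intro v
    have := hFnonneg v
    simp only [hFdef] at this
    linarith
  -- now conclude
  have hexp : (1 - p) * Real.exp (-(p * u)) + p * Real.exp ((1 - p) * u)
      = Real.exp (-(p * u) + Real.log (D u)) := by
    rw [Real.exp_add, Real.exp_log (hD u)]
    simp only [hDdef]
    rw [show (1 - p) * u = u + -(p * u) by ring, Real.exp_add]
    ring
  rw [hexp]
  exact Real.exp_le_exp.2 (key u)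

lemma hoeffding_mgf {Ω : Type*} [MeasurableSpace Ω] (μ : Measure Ω) [IsProbabilityMeasure μ]
    {h : Ω → ℝ} (hm : Measurable h) {a b : ℝ}
    (hab : ∀ ω, a ≤ h ω ∧ h ω ≤ b) (s : ℝ) :
    ∫ ω, Real.exp (s * h ω) ∂μ ≤ Real.exp (s * ∫ ω, h ω ∂μ + s ^ 2 * (b - a) ^ 2 / 8) := by
  have hne : Nonempty Ω := by
    by_contra hcon
    simp only [not_nonempty_iff] at hcon
    have := measure_univ (μ := μ)
    rw [Set.univ_eq_empty_iff.2 hcon, measure_empty] at this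
    exact zero_ne_one this
  obtain ⟨ω₀⟩ := hne
  have hle : a ≤ b := le_trans (hab ω₀).1 (hab ω₀).2
  have hint : Integrable h μ := by
    refine (integrable_const (max |a| |b|)).mono' hm.aestronglyMeasurable ?_
    exact ae_of_all _ fun ω => abs_le_max_abs_abs (hab ω).1 (hab ω).2
  set m := ∫ ω, h ω ∂μ with hmdef
  have hma : a ≤ m := by
    have := integral_mono (integrable_const a) hint (fun ω => (hab ω).1)
    simpa using this
  have hmb : m ≤ b := by
    have := integral_mono hint (integrable_const b) (fun ω => (hab ω).2)
    simpa using this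
  rcases eq_or_lt_of_le hle with heq | hlt
  · have hha : h = fun _ => a := funext fun ω => le_antisymm (heq ▸ (hab ω).2) (hab ω).1
    have hm0 : m = a := by rw [hmdef, hha]; simp
    rw [hha, hm0, ← heq]
    simp [Real.exp_le_exp]
  · have hba : (0:ℝ) < b - a := by linarith
    have hexpint : Integrable (fun ω => Real.exp (s * h ω)) μ := by
      refine (integrable_const (Real.exp (|s| * max |a| |b|))).mono'
        (Real.measurable_exp.comp (hm.const_mul s)).aestronglyMeasurable ?_
      refine ae_of_all _ fun ω => ?_
      rw [Real.norm_eq_abs, abs_of_pos (Real.exp_pos _), Real.exp_le_exp]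
      calc s * h ω ≤ |s * h ω| := le_abs_self _
        _ = |s| * |h ω| := abs_mul _ _
        _ ≤ |s| * max |a| |b| :=
          mul_le_mul_of_nonneg_left (abs_le_max_abs_abs (hab ω).1 (hab ω).2) (abs_nonneg s)
    have hptwise : ∀ ω, Real.exp (s * h ω) ≤
        ((b - h ω) * Real.exp (s * a) + (h ω - a) * Real.exp (s * b)) / (b - a) := by
      intro ω
      have h1 : (0:ℝ) ≤ (b - h ω) / (b - a) := by
        apply div_nonneg _ hba.le; linarith [(hab ω).2]
      have h2 : (0:ℝ) ≤ (h ω - a) / (b - a) := by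
        apply div_nonneg _ hba.le; linarith [(hab ω).1]
      have h3 : (b - h ω) / (b - a) + (h ω - a) / (b - a) = 1 := by
        field_simp
        ring
      have := convexOn_exp.2 (Set.mem_univ (s * a)) (Set.mem_univ (s * b)) h1 h2 h3
      simp only [smul_eq_mul] at this
      have harg : (b - h ω) / (b - a) * (s * a) + (h ω - a) / (b - a) * (s * b) = s * h ω := by
        field_simp
        ring
      rw [harg] at this
      calc Real.exp (s * h ω) ≤
          (b - h ω) / (b - a) * Real.exp (s * a) + (h ω - a) / (b - a) * Real.exp (s * b) := this
        _ = ((b - h ω) * Real.exp (s * a) + (h ω - a) * Real.exp (s * b)) / (b - a) := by ring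
    have hrhsint : Integrable
        (fun ω => ((b - h ω) * Real.exp (s * a) + (h ω - a) * Real.exp (s * b)) / (b - a)) μ := by
      apply Integrable.div_const
      exact (((integrable_const b).sub hint).mul_const _).add ((hint.sub (integrable_const a)).mul_const _)
    have hstep1 : ∫ ω, Real.exp (s * h ω) ∂μ ≤
        ((b - m) * Real.exp (s * a) + (m - a) * Real.exp (s * b)) / (b - a) := by
      calc ∫ ω, Real.exp (s * h ω) ∂μ
          ≤ ∫ ω, ((b - h ω) * Real.exp (s * a) + (h ω - a) * Real.exp (s * b)) / (b - a) ∂μ :=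
            integral_mono hexpint hrhsint hptwise
        _ = ((b - m) * Real.exp (s * a) + (m - a) * Real.exp (s * b)) / (b - a) := by
            have hfe : (fun ω => ((b - h ω) * Real.exp (s * a) + (h ω - a) * Real.exp (s * b)) / (b - a))
                = fun ω => h ω * ((Real.exp (s * b) - Real.exp (s * a)) / (b - a))
                  + (b * Real.exp (s * a) - a * Real.exp (s * b)) / (b - a) :=
              funext fun ω => by ring
            rw [hfe, integral_add (hint.mul_const _) (integrable_const _), integral_mul_const,
              integral_const]
            simp only [probReal_univ, smul_eq_mul, one_mul, ← hmdef]
            field_simp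
            ring
    refine hstep1.trans ?_
    set p : ℝ := (m - a) / (b - a) with hpdef
    set u : ℝ := s * (b - a) with hudef
    have hp0 : 0 ≤ p := div_nonneg (by linarith) hba.le
    have hp1 : p ≤ 1 := by
      rw [hpdef, div_le_one hba]; linarith
    have hpu : p * u = s * (m - a) := by
      rw [hpdef, hudef]; field_simp
    have h1p : (1 - p) * u = s * (b - m) := by
      have : (1:ℝ) - p = (b - m)/(b - a) := by rw [hpdef]; field_simp; ring
      rw [this, hudef]; field_simp
    have e1 : Real.exp (s * a) = Real.exp (s * m) * Real.exp (-(p * u)) := by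
      rw [← Real.exp_add]; congr 1; rw [hpu]; ring
    have e2 : Real.exp (s * b) = Real.exp (s * m) * Real.exp ((1 - p) * u) := by
      rw [← Real.exp_add]; congr 1; rw [h1p]; ring
    have lhs_eq : ((b - m) * Real.exp (s * a) + (m - a) * Real.exp (s * b)) / (b - a)
        = Real.exp (s * m) * ((1 - p) * Real.exp (-(p * u)) + p * Real.exp ((1 - p) * u)) := by
      rw [e1, e2]
      have h1 : b - m = (1 - p) * (b - a) := by rw [hpdef]; field_simp; ring
      have h2 : m - a = p * (b - a) := by rw [hpdef]; field_simp
      rw [h1, h2]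
      field_simp
    rw [lhs_eq]
    calc Real.exp (s * m) * ((1 - p) * Real.exp (-(p * u)) + p * Real.exp ((1 - p) * u))
        ≤ Real.exp (s * m) * Real.exp (u ^ 2 / 8) :=
          mul_le_mul_of_nonneg_left (hoeffding_key hp0 hp1 u) (Real.exp_pos _).le
      _ = Real.exp (s * m + s ^ 2 * (b - a) ^ 2 / 8) := by
          rw [← Real.exp_add]; congr 1; rw [hudef]; ring

lemma bdd_integrable {α : Type*} [MeasurableSpace α] (ν : Measure α) [IsFiniteMeasure ν]
    {F : α → ℝ} {K : ℝ} (hF : Measurable F) (hb : ∀ x, |F x| ≤ K) : Integrable F ν :=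
  (integrable_const K).mono' hF.aestronglyMeasurable
    (ae_of_all _ fun x => by rw [Real.norm_eq_abs]; exact hb x)

lemma mcdiarmid_mgf {X : Type*} [MeasurableSpace X] (P : Measure X) [IsProbabilityMeasure P]
    (c s : ℝ) :
    ∀ (n : ℕ) (f : (Fin n → X) → ℝ) (M : ℝ), Measurable f → (∀ D, |f D| ≤ M) →
      (∀ D i x, |f (Function.update D i x) - f D| ≤ c) →
      ∫ D, Real.exp (s * f D) ∂(Measure.pi fun _ : Fin n => P)
        ≤ Real.exp (s * ∫ D, f D ∂(Measure.pi fun _ : Fin n => P) + n * (s ^ 2 * c ^ 2 / 8)) := by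
  have hXne : Nonempty X := by
    by_contra hcon
    simp only [not_nonempty_iff] at hcon
    have := measure_univ (μ := P)
    rw [Set.univ_eq_empty_iff.2 hcon, measure_empty] at this
    exact zero_ne_one this
  obtain ⟨x₀⟩ := hXne
  intro n
  induction n with
  | zero =>
    intro f M hf hbd hdiff
    have hconst : f = fun _ => f (fun i => i.elim0) :=
      funext fun D => congrArg f (Subsingleton.elim _ _)
    rw [hconst]
    simp [integral_const, measure_univ]
  | succ n IH =>
    intro f M hf hbd hdiff
    have hc0 : 0 ≤ c := (abs_nonneg _).trans (hdiff (fun _ => x₀) 0 x₀)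
    set K := s ^ 2 * c ^ 2 / 8 with hKdef
    have hK0 : 0 ≤ K := by positivity
    set π := Measure.pi fun _ : Fin (n + 1) => P with hπ
    set πn := Measure.pi fun _ : Fin n => P with hπn
    set e := MeasurableEquiv.piFinSuccAbove (fun _ : Fin (n + 1) => X) 0 with he
    have mp : MeasurePreserving e π (P.prod πn) :=
      measurePreserving_piFinSuccAbove (fun _ : Fin (n + 1) => P) 0
    have hsymm : ∀ q : X × (Fin n → X), e.symm q = Fin.cons q.1 q.2 := by
      intro q
      show (Fin.insertNthEquiv (fun _ => X) 0) q = _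
      rw [Fin.insertNthEquiv_zero]
      rfl
    have hcons : Measurable (fun q : X × (Fin n → X) => (Fin.cons q.1 q.2 : Fin (n + 1) → X)) := by
      have := e.symm.measurable
      convert this using 1
      exact funext fun q => (hsymm q).symm
    -- change of variables for any function
    have hchange : ∀ (F : (Fin (n + 1) → X) → ℝ),
        ∫ D, F D ∂π = ∫ q, F (Fin.cons q.1 q.2) ∂(P.prod πn) := by
      intro F
      rw [← (mp.symm e).integral_comp e.symm.measurableEmbedding F]
      refine integral_congr_ae (ae_of_all _ fun q => ?_)
      show F (e.symm q) = F (Fin.cons q.1 q.2)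
      rw [hsymm]
    -- the conditional mean over remaining coordinates
    set g : X → ℝ := fun x => ∫ w, f (Fin.cons x w) ∂πn with hgdef
    have hfc : Measurable (fun q : X × (Fin n → X) => f (Fin.cons q.1 q.2)) := hf.comp hcons
    have hgm : Measurable g :=
      hfc.stronglyMeasurable.integral_prod_right'.measurable
    have hfx_meas : ∀ x, Measurable (fun w : Fin n → X => f (Fin.cons x w)) := fun x =>
      hfc.comp measurable_prodMk_left
    have hgb : ∀ x, |g x| ≤ M := by
      intro x
      calc |g x| ≤ ∫ w, |f (Fin.cons x w)| ∂πn := by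
            simpa [Real.norm_eq_abs] using
              norm_integral_le_integral_norm (μ := πn) (fun w => f (Fin.cons x w))
        _ ≤ ∫ _w, M ∂πn := integral_mono
              ((bdd_integrable πn (hfx_meas x) (fun w => hbd _)).abs)
              (integrable_const M) (fun w => by simpa using hbd _)
        _ = M := by simp [measure_univ]
    have hgdiff : ∀ x x', |g x - g x'| ≤ c := by
      intro x x'
      have hptw : ∀ w, |f (Fin.cons x w) - f (Fin.cons x' w)| ≤ c := by
        intro w
        have h1 : (Fin.cons x w : Fin (n + 1) → X)
            = Function.update (Fin.cons x' w : Fin (n + 1) → X) 0 x := by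
          funext j
          cases j using Fin.cases with
          | zero => simp
          | succ k => simp [Fin.cons_succ, Function.update_of_ne (Fin.succ_ne_zero k)]
        rw [h1]
        exact hdiff _ _ _
      have hint1 := bdd_integrable πn (hfx_meas x) (fun w => hbd _)
      have hint2 := bdd_integrable πn (hfx_meas x') (fun w => hbd _)
      calc |g x - g x'| = |∫ w, (f (Fin.cons x w) - f (Fin.cons x' w)) ∂πn| := by
            rw [integral_sub hint1 hint2]
        _ ≤ ∫ w, |f (Fin.cons x w) - f (Fin.cons x' w)| ∂πn := by
            simpa [Real.norm_eq_abs] using norm_integral_le_integral_norm (μ := πn)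
              (fun w => f (Fin.cons x w) - f (Fin.cons x' w))
        _ ≤ ∫ _w, c ∂πn := integral_mono ((hint1.sub hint2).abs) (integrable_const c)
              (fun w => hptw w)
        _ = c := by simp [measure_univ]
    -- bounds on g
    set a : ℝ := sInf (Set.range g) with hadef
    have hbdd : BddBelow (Set.range g) := by
      refine ⟨g x₀ - c, ?_⟩
      rintro y ⟨x, rfl⟩
      have := hgdiff x₀ x
      have := abs_le.1 this
      linarith [this.1]
    have hal : ∀ x, a ≤ g x := fun x => csInf_le hbdd (Set.mem_range_self x)
    have hau : ∀ x, g x ≤ a + c := by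
      intro x
      have : g x - c ≤ a := by
        apply le_csInf ⟨g x₀, Set.mem_range_self x₀⟩
        rintro y ⟨x', rfl⟩
        have := abs_le.1 (hgdiff x x')
        linarith [this.2]
      linarith
    -- inner application of IH
    have hinner : ∀ x, ∫ w, Real.exp (s * f (Fin.cons x w)) ∂πn ≤ Real.exp (s * g x + n * K) := by
      intro x
      have := IH (fun w => f (Fin.cons x w)) M (hfx_meas x) (fun w => hbd _) ?_
      · exact this
      · intro w i y
        have h2 : (Fin.cons x (Function.update w i y) : Fin (n + 1) → X) =
            Function.update (Fin.cons x w : Fin (n + 1) → X) i.succ y := by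
          funext j
          cases j using Fin.cases with
          | zero => simp [Function.update_of_ne (Fin.succ_ne_zero i).symm]
          | succ k => simp [Fin.cons_succ, Function.update_apply, Fin.succ_inj]
        simpa [h2] using hdiff (Fin.cons x w) i.succ y
    -- main chain
    have hexpm : Measurable (fun q : X × (Fin n → X) => Real.exp (s * f (Fin.cons q.1 q.2))) :=
      Real.measurable_exp.comp (hfc.const_mul s)
    have hexpb : ∀ q : X × (Fin n → X), |Real.exp (s * f (Fin.cons q.1 q.2))| ≤
        Real.exp (|s| * M) := by
      intro q
      rw [abs_of_pos (Real.exp_pos _), Real.exp_le_exp]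
      calc s * f (Fin.cons q.1 q.2) ≤ |s * f (Fin.cons q.1 q.2)| := le_abs_self _
        _ = |s| * |f (Fin.cons q.1 q.2)| := abs_mul _ _
        _ ≤ |s| * M := mul_le_mul_of_nonneg_left (hbd _) (abs_nonneg s)
    have step1 : ∫ D, Real.exp (s * f D) ∂π
        = ∫ x, ∫ w, Real.exp (s * f (Fin.cons x w)) ∂πn ∂P := by
      rw [hchange (fun D => Real.exp (s * f D))]
      exact integral_prod _ (bdd_integrable _ hexpm hexpb)
    have hinner_meas : Measurable (fun x => ∫ w, Real.exp (s * f (Fin.cons x w)) ∂πn) :=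
      hexpm.stronglyMeasurable.integral_prod_right'.measurable
    have hinner_bd : ∀ x, |∫ w, Real.exp (s * f (Fin.cons x w)) ∂πn| ≤ Real.exp (|s| * M) := by
      intro x
      calc |∫ w, Real.exp (s * f (Fin.cons x w)) ∂πn|
          ≤ ∫ w, |Real.exp (s * f (Fin.cons x w))| ∂πn := by
            simpa [Real.norm_eq_abs] using norm_integral_le_integral_norm (μ := πn)
              (fun w => Real.exp (s * f (Fin.cons x w)))
        _ ≤ ∫ _w, Real.exp (|s| * M) ∂πn := integral_mono
              ((bdd_integrable πn (hexpm.comp measurable_prodMk_left)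
                (fun w => hexpb (x, w))).abs)
              (integrable_const _) (fun w => by
                simpa using hexpb (x, w))
        _ = Real.exp (|s| * M) := by simp [measure_univ]
    have hgexp_meas : Measurable (fun x => Real.exp (s * g x + n * K)) :=
      Real.measurable_exp.comp ((hgm.const_mul s).add_const _)
    have hgexp_bd : ∀ x, |Real.exp (s * g x + n * K)| ≤ Real.exp (|s| * M + n * K) := by
      intro x
      rw [abs_of_pos (Real.exp_pos _), Real.exp_le_exp]
      have : s * g x ≤ |s| * M := by
        calc s * g x ≤ |s * g x| := le_abs_self _
          _ = |s| * |g x| := abs_mul _ _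
          _ ≤ |s| * M := mul_le_mul_of_nonneg_left (hgb x) (abs_nonneg s)
      linarith
    have step2 : ∫ x, ∫ w, Real.exp (s * f (Fin.cons x w)) ∂πn ∂P
        ≤ ∫ x, Real.exp (s * g x + n * K) ∂P :=
      integral_mono (bdd_integrable P hinner_meas hinner_bd)
        (bdd_integrable P hgexp_meas hgexp_bd) hinner
    have step3 : ∫ x, Real.exp (s * g x + n * K) ∂P
        ≤ Real.exp (n * K) * Real.exp (s * ∫ x, g x ∂P + s ^ 2 * c ^ 2 / 8) := by
      have : ∀ x, Real.exp (s * g x + n * K) = Real.exp (n * K) * Real.exp (s * g x) := by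
        intro x; rw [← Real.exp_add]; ring_nf
      rw [integral_congr_ae (ae_of_all _ this), integral_const_mul]
      refine mul_le_mul_of_nonneg_left ?_ (Real.exp_pos _).le
      have := hoeffding_mgf P hgm (a := a) (b := a + c) (fun x => ⟨hal x, hau x⟩) s
      simpa using this
    have hmean : ∫ x, g x ∂P = ∫ D, f D ∂π := by
      rw [hchange f]
      rw [integral_prod _ (bdd_integrable _ hfc (fun q => hbd _))]
    calc ∫ D, Real.exp (s * f D) ∂π
        = ∫ x, ∫ w, Real.exp (s * f (Fin.cons x w)) ∂πn ∂P := step1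
      _ ≤ ∫ x, Real.exp (s * g x + n * K) ∂P := step2
      _ ≤ Real.exp (n * K) * Real.exp (s * ∫ x, g x ∂P + s ^ 2 * c ^ 2 / 8) := step3
      _ = Real.exp (s * ∫ D, f D ∂π + (n + 1 : ℕ) * K) := by
          rw [hmean, ← Real.exp_add]
          congr 1
          push_cast
          ring

lemma mcdiarmid_tail {X : Type*} [MeasurableSpace X] (P : Measure X) [IsProbabilityMeasure P]
    {n : ℕ} (hn : 1 ≤ n) {f : (Fin n → X) → ℝ} (hf : Measurable f) {M : ℝ}
    (hbd : ∀ D, |f D| ≤ M) {c : ℝ} (hc : 0 < c)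
    (hdiff : ∀ D i x, |f (Function.update D i x) - f D| ≤ c) {t : ℝ} (ht : 0 < t) :
    (Measure.pi fun _ : Fin n => P) {D | (∫ D', f D' ∂(Measure.pi fun _ : Fin n => P)) + t ≤ f D}
      ≤ ENNReal.ofReal (Real.exp (-2 * t ^ 2 / (n * c ^ 2))) := by
  set π := Measure.pi fun _ : Fin n => P with hπ
  set m := ∫ D', f D' ∂π with hm
  have hn0 : (0:ℝ) < n := by exact_mod_cast hn
  set s : ℝ := 4 * t / (n * c ^ 2) with hs
  have hs0 : 0 < s := by positivity
  set F : (Fin n → X) → ℝ := fun D => Real.exp (s * (f D - m)) with hF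
  have hFm : Measurable F := Real.measurable_exp.comp ((hf.sub_const m).const_mul s)
  have hFb : ∀ D, |F D| ≤ Real.exp (|s| * (M + |m|)) := by
    intro D
    rw [hF, abs_of_pos (Real.exp_pos _), Real.exp_le_exp]
    calc s * (f D - m) ≤ |s * (f D - m)| := le_abs_self _
      _ = |s| * |f D - m| := abs_mul _ _
      _ ≤ |s| * (M + |m|) := by
          apply mul_le_mul_of_nonneg_left _ (abs_nonneg s)
          calc |f D - m| ≤ |f D| + |m| := abs_sub _ _
            _ ≤ M + |m| := by linarith [hbd D]
  have hFint : Integrable F π := bdd_integrable π hFm hFb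
  have hmarkov := mul_meas_ge_le_integral_of_nonneg
    (ae_of_all π (fun D => (Real.exp_pos (s * (f D - m))).le)) hFint (Real.exp (s * t))
  have hsub : {D | m + t ≤ f D} ⊆ {D | Real.exp (s * t) ≤ F D} := by
    intro D hD
    simp only [Set.mem_setOf_eq] at hD ⊢
    rw [hF, Real.exp_le_exp]
    have : t ≤ f D - m := by linarith
    exact mul_le_mul_of_nonneg_left this hs0.le
  have hmgf : ∫ D, F D ∂π ≤ Real.exp (n * (s ^ 2 * c ^ 2 / 8)) := by
    have heq : ∀ D, F D = Real.exp (-(s * m)) * Real.exp (s * f D) := by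
      intro D; rw [hF, ← Real.exp_add]; ring_nf
    calc ∫ D, F D ∂π = Real.exp (-(s * m)) * ∫ D, Real.exp (s * f D) ∂π := by
          rw [integral_congr_ae (ae_of_all _ heq), integral_const_mul]
      _ ≤ Real.exp (-(s * m)) * Real.exp (s * m + n * (s ^ 2 * c ^ 2 / 8)) := by
          apply mul_le_mul_of_nonneg_left _ (Real.exp_pos _).le
          exact mcdiarmid_mgf P c s n f M hf hbd hdiff
      _ = Real.exp (n * (s ^ 2 * c ^ 2 / 8)) := by rw [← Real.exp_add]; ring_nf
  have hmono : (π {D | m + t ≤ f D}).toReal ≤ (π {D | Real.exp (s * t) ≤ F D}).toReal := by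
    apply ENNReal.toReal_mono (measure_ne_top _ _)
    exact measure_mono hsub
  have hfinal : (π {D | m + t ≤ f D}).toReal ≤ Real.exp (-2 * t ^ 2 / (n * c ^ 2)) := by
    have h1 : Real.exp (s * t) * (π {D | Real.exp (s * t) ≤ F D}).toReal
        ≤ Real.exp (n * (s ^ 2 * c ^ 2 / 8)) := le_trans hmarkov hmgf
    have h2 : (π {D | Real.exp (s * t) ≤ F D}).toReal
        ≤ Real.exp (n * (s ^ 2 * c ^ 2 / 8)) / Real.exp (s * t) := by
      rw [le_div_iff₀ (Real.exp_pos _)]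
      linarith [h1]
    refine le_trans (le_trans hmono h2) (le_of_eq ?_)
    rw [← Real.exp_sub]
    congr 1
    rw [hs]
    field_simp
    ring
  rw [← ENNReal.ofReal_toReal (measure_ne_top π _)]
  exact ENNReal.ofReal_le_ofReal hfinal

lemma pi_map_pair {X : Type*} [MeasurableSpace X] (P : Measure X) [IsProbabilityMeasure P]
    {n : ℕ} {i j : Fin n} (hij : i ≠ j) :
    (Measure.pi fun _ : Fin n => P).map (fun D => (D i, D j)) = P.prod P := by
  have hmeas : Measurable (fun D : Fin n → X => (D i, D j)) :=
    (measurable_pi_apply i).prodMk (measurable_pi_apply j)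
  refine (Measure.prod_eq ?_).symm
  intro s t hs ht
  rw [Measure.map_apply hmeas (hs.prod ht)]
  have hpre : (fun D : Fin n → X => (D i, D j)) ⁻¹' (s ×ˢ t)
      = Set.pi Set.univ (fun k => if k = i then s else if k = j then t else Set.univ) := by
    ext D
    simp only [Set.mem_preimage, Set.mem_prod, Set.mem_pi, Set.mem_univ, true_implies]
    constructor
    · rintro ⟨h1, h2⟩ k
      split_ifs with hki hkj
      · rwa [hki]
      · rwa [hkj]
      · trivial
    · intro h
      refine ⟨?_, ?_⟩
      · have := h i; rwa [if_pos rfl] at this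
      · have := h j; rwa [if_neg hij.symm, if_pos rfl] at this
  rw [hpre, Measure.pi_pi]
  have hcalc : ∀ k : Fin n, P (if k = i then s else if k = j then t else Set.univ)
      = if k = i then P s else if k = j then P t else 1 := by
    intro k; split_ifs <;> simp [measure_univ]
  simp only [hcalc]
  rw [← Finset.mul_prod_erase univ _ (mem_univ i), if_pos rfl,
    ← Finset.mul_prod_erase _ _ (Finset.mem_erase.2 ⟨hij.symm, mem_univ j⟩),
    if_neg hij.symm, if_pos rfl]
  rw [Finset.prod_eq_one, mul_one]
  intro k hk
  simp only [Finset.mem_erase] at hk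
  rw [if_neg hk.2.1, if_neg hk.1]

set_option maxHeartbeats 1000000 in
theorem stmt12 {d L : ℕ} {lam R Lbar : ℝ} (hlam : 0 < lam) (hR : 0 < R) (hLbar : 0 ≤ Lbar)
    (g : ℝ → ℝ) (hgm : Measurable g) (hg : ∀ t, 0 ≤ g t ∧ g t ≤ 1)
    (P : Measure (Pt d L)) [IsProbabilityMeasure P]
    (S : Set (Pt d L)) (hSm : MeasurableSet S) (hS1 : P S = 1)
    (hSx : ∀ z ∈ S, norm2 z.1 ≤ R)
    (hSy : ∀ z ∈ S, ∀ z' ∈ S, 0 ≤ ipY z.2 z'.2 ∧ ipY z.2 z'.2 ≤ Lbar)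
    (Astar : Matrix (Fin d) (Fin d) ℝ) (hAstar : Astar.PosSemidef)
    {n : ℕ} (hn : 2 ≤ n) {δ : ℝ} (hδ0 : 0 < δ) (hδ1 : δ < 1) :
    ENNReal.ofReal (1 - δ) ≤
      (Measure.pi fun _ : Fin n => P) {D : Fin n → Pt d L |
        empRisk g lam Astar D - popRisk g lam P Astar ≤
          4 * (Lbar ^ 2 + frobNorm Astar ^ 2 * R ^ 4) *
            Real.sqrt (Real.log (1 / δ) / (2 * n))} := by
  classical
  have hn0 : (0:ℝ) < n := by
    have : (2:ℝ) ≤ n := by exact_mod_cast hn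
    linarith
  have hn1 : (1:ℝ) < n := by
    have : (2:ℝ) ≤ n := by exact_mod_cast hn
    linarith
  have hfrob0 : 0 ≤ frobNorm Astar := Real.sqrt_nonneg _
  set C2 : ℝ := Lbar ^ 2 + frobNorm Astar ^ 2 * R ^ 4 with hC2def
  have hC20 : 0 ≤ C2 := by positivity
  set t : ℝ := 4 * C2 * Real.sqrt (Real.log (1 / δ) / (2 * n)) with htdef
  have hargnn : 0 ≤ Real.log (1 / δ) / (2 * n) := by
    apply div_nonneg _ (by positivity)
    apply Real.log_nonneg
    rw [le_div_iff₀ hδ0]; linarith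
  have ht0 : 0 ≤ t := by positivity
  set B : ℝ := (Lbar + frobNorm Astar * R ^ 2) ^ 2 with hBdef
  have hB0 : 0 ≤ B := sq_nonneg _
  have hB2C : B ≤ 2 * C2 := by
    rw [hBdef, hC2def]
    nlinarith [sq_nonneg (Lbar - frobNorm Astar * R ^ 2)]
  -- the retraction onto S
  have hSne : S.Nonempty := by
    rcases Set.eq_empty_or_nonempty S with h | h
    · rw [h, measure_empty] at hS1; exact absurd hS1 zero_ne_one
    · exact h
  obtain ⟨z₀, hz₀⟩ := hSne
  set r : Pt d L → Pt d L := fun z => if z ∈ S then z else z₀ with hrdef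
  have hrS : ∀ z, r z ∈ S := by
    intro z; rw [hrdef]; dsimp only; split_ifs with h; exacts [h, hz₀]
  have hrid : ∀ z ∈ S, r z = z := by
    intro z hz; rw [hrdef]; dsimp only; rw [if_pos hz]
  have hrm : Measurable r := Measurable.ite hSm measurable_id measurable_const
  -- loss bounds on S
  have hsumsq : ∀ z ∈ S, ∑ i, z.1 i ^ 2 ≤ R ^ 2 := by
    intro z hz
    have h0 : 0 ≤ ∑ i, z.1 i ^ 2 := Finset.sum_nonneg fun i _ => sq_nonneg _
    have h1 := hSx z hz
    rw [norm2] at h1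
    nlinarith [Real.sq_sqrt h0, Real.sqrt_nonneg (∑ i, z.1 i ^ 2)]
  have hqbound : ∀ z ∈ S, ∀ z' ∈ S, |qForm Astar z.1 z'.1| ≤ frobNorm Astar * R ^ 2 := by
    intro z hz z' hz'
    have hsq : (qForm Astar z.1 z'.1) ^ 2 ≤ (frobNorm Astar * R ^ 2) ^ 2 := by
      have hq : qForm Astar z.1 z'.1
          = ∑ p : Fin d × Fin d, Astar p.1 p.2 * (z.1 p.1 * z'.1 p.2) := by
        rw [qForm, ← Finset.univ_product_univ, Finset.sum_product]
        exact Finset.sum_congr rfl fun i _ => Finset.sum_congr rfl fun j _ => by ring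
      have hcs := Finset.sum_mul_sq_le_sq_mul_sq Finset.univ
        (fun p : Fin d × Fin d => Astar p.1 p.2) (fun p => z.1 p.1 * z'.1 p.2)
      have hfr : ∑ p : Fin d × Fin d, (Astar p.1 p.2) ^ 2 = frobNorm Astar ^ 2 := by
        rw [frobNorm, Real.sq_sqrt (by positivity), ← Finset.univ_product_univ,
          Finset.sum_product]
      have hxp : ∑ p : Fin d × Fin d, (z.1 p.1 * z'.1 p.2) ^ 2
          = (∑ i, z.1 i ^ 2) * (∑ j, z'.1 j ^ 2) := by
        rw [← Finset.univ_product_univ, Finset.sum_product, Finset.sum_mul_sum]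
        exact Finset.sum_congr rfl fun i _ => Finset.sum_congr rfl fun j _ => by ring
      rw [hq]
      refine hcs.trans ?_
      rw [hfr, hxp, mul_pow]
      have h1 := hsumsq z hz
      have h2 := hsumsq z' hz'
      have h3 : 0 ≤ ∑ i, z.1 i ^ 2 := Finset.sum_nonneg fun i _ => sq_nonneg _
      have h4 : 0 ≤ ∑ i, z'.1 i ^ 2 := Finset.sum_nonneg fun i _ => sq_nonneg _
      have h5 : (0:ℝ) ≤ R ^ 2 := sq_nonneg _
      calc frobNorm Astar ^ 2 * ((∑ i, z.1 i ^ 2) * (∑ j, z'.1 j ^ 2))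
          ≤ frobNorm Astar ^ 2 * (R ^ 2 * R ^ 2) := by
            apply mul_le_mul_of_nonneg_left _ (by positivity)
            exact mul_le_mul h1 h2 h4 h5
        _ = frobNorm Astar ^ 2 * (R ^ 2) ^ 2 := by ring
    calc |qForm Astar z.1 z'.1| = Real.sqrt ((qForm Astar z.1 z'.1) ^ 2) :=
          (Real.sqrt_sq_eq_abs _).symm
      _ ≤ Real.sqrt ((frobNorm Astar * R ^ 2) ^ 2) := Real.sqrt_le_sqrt hsq
      _ = frobNorm Astar * R ^ 2 := Real.sqrt_sq (by positivity)
  have hlossb : ∀ z ∈ S, ∀ z' ∈ S,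
      lam * Astar.trace ≤ lossFn g lam Astar z z' ∧
        lossFn g lam Astar z z' ≤ lam * Astar.trace + B := by
    intro z hz z' hz'
    constructor
    · rw [lossFn]
      have : 0 ≤ g (ipY z.2 z'.2) * (ipY z.2 z'.2 - qForm Astar z.1 z'.1) ^ 2 :=
        mul_nonneg (hg _).1 (sq_nonneg _)
      linarith
    · rw [lossFn]
      have hsqb : (ipY z.2 z'.2 - qForm Astar z.1 z'.1) ^ 2 ≤ B := by
        rw [hBdef]
        have hip := hSy z hz z' hz'
        have hq := abs_le.1 (hqbound z hz z' hz')
        apply sq_le_sq'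
        · linarith
        · linarith
      have : g (ipY z.2 z'.2) * (ipY z.2 z'.2 - qForm Astar z.1 z'.1) ^ 2 ≤ B :=
        le_trans (mul_le_of_le_one_left (sq_nonneg _) (hg _).2) hsqb
      linarith
  have hlossabs : ∀ z ∈ S, ∀ z' ∈ S,
      |lossFn g lam Astar z z'| ≤ |lam * Astar.trace| + B := by
    intro z hz z' hz'
    have h := hlossb z hz z' hz'
    rw [abs_le]
    constructor
    · linarith [neg_abs_le (lam * Astar.trace)]
    · linarith [le_abs_self (lam * Astar.trace)]
  have hdiffloss : ∀ z ∈ S, ∀ z' ∈ S, ∀ w ∈ S, ∀ w' ∈ S,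
      |lossFn g lam Astar z z' - lossFn g lam Astar w w'| ≤ B := by
    intro z hz z' hz' w hw w' hw'
    have h1 := hlossb z hz z' hz'
    have h2 := hlossb w hw w' hw'
    rw [abs_le]
    exact ⟨by linarith, by linarith⟩
  -- measurability
  have hipYm : Measurable fun q : Pt d L × Pt d L => ipY q.1.2 q.2.2 := by
    show Measurable fun q : Pt d L × Pt d L => ∑ i, q.1.2 i * q.2.2 i
    refine Finset.measurable_sum _ fun i _ => Measurable.mul ?_ ?_
    · exact (measurable_fst.snd.eval : Measurable fun q : Pt d L × Pt d L => q.1.2 i)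
    · exact (measurable_snd.snd.eval : Measurable fun q : Pt d L × Pt d L => q.2.2 i)
  have hqm : Measurable fun q : Pt d L × Pt d L => qForm Astar q.1.1 q.2.1 := by
    show Measurable fun q : Pt d L × Pt d L => ∑ i, ∑ j, q.1.1 i * Astar i j * q.2.1 j
    refine Finset.measurable_sum _ fun i _ => Finset.measurable_sum _ fun j _ => ?_
    refine Measurable.mul (Measurable.mul_const ?_ (Astar i j)) ?_
    · exact (measurable_fst.fst.eval : Measurable fun q : Pt d L × Pt d L => q.1.1 i)
    · exact (measurable_snd.fst.eval : Measurable fun q : Pt d L × Pt d L => q.2.1 j)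
  have hlossm : Measurable fun q : Pt d L × Pt d L => lossFn g lam Astar q.1 q.2 := by
    show Measurable fun q : Pt d L × Pt d L =>
      g (ipY q.1.2 q.2.2) * (ipY q.1.2 q.2.2 - qForm Astar q.1.1 q.2.1) ^ 2 + lam * Astar.trace
    exact ((hgm.comp hipYm).mul ((hipYm.sub hqm).pow_const 2)).add_const _
  -- the regularized empirical risk
  set f : (Fin n → Pt d L) → ℝ := fun D => empRisk g lam Astar (fun i => r (D i)) with hfdef
  have hpairm : ∀ i j : Fin n,
      Measurable fun D : Fin n → Pt d L => lossFn g lam Astar (r (D i)) (r (D j)) := fun i j =>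
    hlossm.comp ((hrm.comp (measurable_pi_apply i)).prodMk (hrm.comp (measurable_pi_apply j)))
  have hfm : Measurable f := by
    have : f = fun D => (1 / ((n : ℝ) * ((n : ℝ) - 1))) *
        ∑ i, ∑ j ∈ univ.erase i, lossFn g lam Astar (r (D i)) (r (D j)) := rfl
    rw [this]
    exact (Finset.measurable_sum _ fun i _ =>
      Finset.measurable_sum _ fun j _ => hpairm i j).const_mul _
  have hnn1 : (0:ℝ) < (n:ℝ) * ((n:ℝ) - 1) := by nlinarith
  have hcard : ∀ i : Fin n, (((univ : Finset (Fin n)).erase i).card : ℝ) = (n:ℝ) - 1 := by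
    intro i
    rw [Finset.card_erase_of_mem (mem_univ i), Finset.card_univ, Fintype.card_fin,
      Nat.cast_sub (by omega)]
    simp
  have hsum_const : ∀ a : ℝ,
      (∑ _i : Fin n, ∑ _j ∈ (univ : Finset (Fin n)).erase _i, a) = (n:ℝ) * (((n:ℝ) - 1) * a) := by
    intro a
    calc (∑ _i : Fin n, ∑ _j ∈ (univ : Finset (Fin n)).erase _i, a)
        = ∑ i : Fin n, (((n:ℝ) - 1) * a) := by
          refine Finset.sum_congr rfl fun i _ => ?_
          rw [Finset.sum_const, nsmul_eq_mul, hcard]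
      _ = (n:ℝ) * (((n:ℝ) - 1) * a) := by
          rw [Finset.sum_const, nsmul_eq_mul, Finset.card_univ, Fintype.card_fin]
  have hinv : ∀ a : ℝ, (1 / ((n : ℝ) * ((n : ℝ) - 1))) * ((n:ℝ) * (((n:ℝ) - 1) * a)) = a := by
    intro a
    have : (n:ℝ) - 1 ≠ 0 := by linarith
    field_simp
  have hfbounds : ∀ D, lam * Astar.trace ≤ f D ∧ f D ≤ lam * Astar.trace + B := by
    intro D
    have hlo : (n:ℝ) * (((n:ℝ) - 1) * (lam * Astar.trace))
        ≤ ∑ i, ∑ j ∈ univ.erase i, lossFn g lam Astar (r (D i)) (r (D j)) := by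
      rw [← hsum_const]
      exact Finset.sum_le_sum fun i _ => Finset.sum_le_sum fun j _ =>
        (hlossb _ (hrS _) _ (hrS _)).1
    have hhi : (∑ i, ∑ j ∈ univ.erase i, lossFn g lam Astar (r (D i)) (r (D j)))
        ≤ (n:ℝ) * (((n:ℝ) - 1) * (lam * Astar.trace + B)) := by
      rw [← hsum_const]
      exact Finset.sum_le_sum fun i _ => Finset.sum_le_sum fun j _ =>
        (hlossb _ (hrS _) _ (hrS _)).2
    have hpos : (0:ℝ) ≤ 1 / ((n : ℝ) * ((n : ℝ) - 1)) := by positivity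
    constructor
    · have := mul_le_mul_of_nonneg_left hlo hpos
      rwa [hinv] at this
    · have := mul_le_mul_of_nonneg_left hhi hpos
      rwa [hinv] at this
  set M : ℝ := |lam * Astar.trace| + B with hMdef
  have hM : ∀ D, |f D| ≤ M := by
    intro D
    have h := hfbounds D
    rw [abs_le]
    constructor
    · have := neg_abs_le (lam * Astar.trace); rw [hMdef]; linarith
    · have := le_abs_self (lam * Astar.trace); rw [hMdef]; linarith
  -- bounded differences
  have hdiff : ∀ D (k : Fin n) x, |f (Function.update D k x) - f D| ≤ 2 * B / n := by
    intro D k x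
    set u : Fin n → Pt d L := fun i => r (D i) with hu
    set v : Fin n → Pt d L := fun i => r (Function.update D k x i) with hv
    have hveq : ∀ i, i ≠ k → v i = u i := by
      intro i hik
      rw [hv, hu]; dsimp only; rw [Function.update_of_ne hik]
    have hterm : ∀ i j : Fin n, |lossFn g lam Astar (v i) (v j) - lossFn g lam Astar (u i) (u j)|
        ≤ (if i = k ∨ j = k then B else 0) := by
      intro i j
      by_cases hik : i = k
      · rw [if_pos (Or.inl hik)]
        exact hdiffloss _ (hrS _) _ (hrS _) _ (hrS _) _ (hrS _)
      · by_cases hjk : j = k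
        · rw [if_pos (Or.inr hjk)]
          exact hdiffloss _ (hrS _) _ (hrS _) _ (hrS _) _ (hrS _)
        · rw [if_neg (by tauto), hveq i hik, hveq j hjk]
          simp
    have hrow : ∀ i : Fin n,
        (∑ j ∈ univ.erase i, |lossFn g lam Astar (v i) (v j) - lossFn g lam Astar (u i) (u j)|)
          ≤ (if i = k then ((n:ℝ) - 1) * B else B) := by
      intro i
      by_cases hik : i = k
      · rw [if_pos hik]
        calc (∑ j ∈ univ.erase i, |lossFn g lam Astar (v i) (v j) - lossFn g lam Astar (u i) (u j)|)
            ≤ ∑ _j ∈ univ.erase i, B := Finset.sum_le_sum fun j _ => by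
              refine (hterm i j).trans ?_
              split_ifs <;> simp [hB0]
          _ = ((n:ℝ) - 1) * B := by rw [Finset.sum_const, nsmul_eq_mul, hcard]
      · rw [if_neg hik]
        calc (∑ j ∈ univ.erase i, |lossFn g lam Astar (v i) (v j) - lossFn g lam Astar (u i) (u j)|)
            ≤ ∑ j ∈ univ.erase i, (if j = k then B else 0) := by
              refine Finset.sum_le_sum fun j _ => (hterm i j).trans ?_
              by_cases hjk : j = k <;> simp [hik, hjk]
          _ = B := by
              rw [Finset.sum_ite_eq' (univ.erase i) k (fun _ => B),
                if_pos (Finset.mem_erase.2 ⟨fun h => hik h.symm, mem_univ k⟩)]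
    have hSigma : |(∑ i, ∑ j ∈ univ.erase i, lossFn g lam Astar (v i) (v j)) -
        (∑ i, ∑ j ∈ univ.erase i, lossFn g lam Astar (u i) (u j))| ≤ 2 * ((n:ℝ) - 1) * B := by
      have hEq : (∑ i, ∑ j ∈ univ.erase i, lossFn g lam Astar (v i) (v j)) -
          (∑ i, ∑ j ∈ univ.erase i, lossFn g lam Astar (u i) (u j))
          = ∑ i, ∑ j ∈ univ.erase i,
              (lossFn g lam Astar (v i) (v j) - lossFn g lam Astar (u i) (u j)) := by
        rw [← Finset.sum_sub_distrib]
        exact Finset.sum_congr rfl fun i _ => (Finset.sum_sub_distrib _ _).symm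
      rw [hEq]
      calc |∑ i, ∑ j ∈ univ.erase i,
              (lossFn g lam Astar (v i) (v j) - lossFn g lam Astar (u i) (u j))|
          ≤ ∑ i, |∑ j ∈ univ.erase i,
              (lossFn g lam Astar (v i) (v j) - lossFn g lam Astar (u i) (u j))| :=
            Finset.abs_sum_le_sum_abs _ _
        _ ≤ ∑ i, ∑ j ∈ univ.erase i,
              |lossFn g lam Astar (v i) (v j) - lossFn g lam Astar (u i) (u j)| :=
            Finset.sum_le_sum fun i _ => Finset.abs_sum_le_sum_abs _ _
        _ ≤ ∑ i, (if i = k then ((n:ℝ) - 1) * B else B) :=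
            Finset.sum_le_sum fun i _ => hrow i
        _ = 2 * ((n:ℝ) - 1) * B := by
            rw [← Finset.sum_erase_add _ _ (mem_univ k), if_pos rfl]
            have : (∑ i ∈ univ.erase k, if i = k then ((n:ℝ) - 1) * B else B)
                = ∑ _i ∈ univ.erase k, B :=
              Finset.sum_congr rfl fun i hi => if_neg (Finset.mem_erase.1 hi).1
            rw [this, Finset.sum_const, nsmul_eq_mul, hcard]
            ring
    have hfdiffeq : f (Function.update D k x) - f D
        = (1 / ((n : ℝ) * ((n : ℝ) - 1))) *
          ((∑ i, ∑ j ∈ univ.erase i, lossFn g lam Astar (v i) (v j)) -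
            (∑ i, ∑ j ∈ univ.erase i, lossFn g lam Astar (u i) (u j))) := by
      rw [hfdef]; dsimp only
      rw [empRisk, empRisk]
      ring
    rw [hfdiffeq, abs_mul, abs_of_pos (by positivity : (0:ℝ) < 1 / ((n : ℝ) * ((n : ℝ) - 1)))]
    calc (1 / ((n : ℝ) * ((n : ℝ) - 1))) *
          |(∑ i, ∑ j ∈ univ.erase i, lossFn g lam Astar (v i) (v j)) -
            (∑ i, ∑ j ∈ univ.erase i, lossFn g lam Astar (u i) (u j))|
        ≤ (1 / ((n : ℝ) * ((n : ℝ) - 1))) * (2 * ((n:ℝ) - 1) * B) :=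
          mul_le_mul_of_nonneg_left hSigma (by positivity)
      _ = 2 * B / n := by
          have : (n:ℝ) - 1 ≠ 0 := by linarith
          field_simp
  -- mean of f equals popRisk
  have hae : ∀ᵐ z ∂P, z ∈ S := by
    rw [ae_iff]
    have : {z | ¬ z ∈ S} = Sᶜ := rfl
    rw [this, measure_compl hSm (measure_ne_top _ _), hS1, measure_univ, tsub_self]
  have hΦm : Measurable fun q : Pt d L × Pt d L => lossFn g lam Astar (r q.1) (r q.2) :=
    hlossm.comp ((hrm.comp measurable_fst).prodMk (hrm.comp measurable_snd))
  have hΦb : ∀ q : Pt d L × Pt d L, |lossFn g lam Astar (r q.1) (r q.2)| ≤ M := fun q => by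
    rw [hMdef]; exact hlossabs _ (hrS _) _ (hrS _)
  have hpairb : ∀ i j : Fin n, ∀ D : Fin n → Pt d L,
      |lossFn g lam Astar (r (D i)) (r (D j))| ≤ M := fun i j D => by
    rw [hMdef]; exact hlossabs _ (hrS _) _ (hrS _)
  have hIeq : ∀ i j : Fin n, j ≠ i →
      (∫ D, lossFn g lam Astar (r (D i)) (r (D j)) ∂(Measure.pi fun _ : Fin n => P))
        = popRisk g lam P Astar := by
    intro i j hji
    have hij : i ≠ j := fun h => hji h.symm
    have hpm : Measurable (fun D : Fin n → Pt d L => (D i, D j)) :=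
      (measurable_pi_apply i).prodMk (measurable_pi_apply j)
    have step : (∫ D, lossFn g lam Astar (r (D i)) (r (D j)) ∂(Measure.pi fun _ : Fin n => P))
        = ∫ q, lossFn g lam Astar (r q.1) (r q.2) ∂(P.prod P) := by
      rw [← pi_map_pair P hij, integral_map hpm.aemeasurable hΦm.aestronglyMeasurable]
    rw [step, integral_prod _ (bdd_integrable _ hΦm hΦb)]
    rw [popRisk]
    refine integral_congr_ae ?_
    filter_upwards [hae] with z hz
    rw [hrid z hz]
    refine integral_congr_ae ?_
    filter_upwards [hae] with z' hz'
    rw [hrid z' hz']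
  have hmean : (∫ D, f D ∂(Measure.pi fun _ : Fin n => P)) = popRisk g lam P Astar := by
    have h1 : (∫ D, f D ∂(Measure.pi fun _ : Fin n => P))
        = (1 / ((n : ℝ) * ((n : ℝ) - 1))) * ∑ i, ∑ j ∈ univ.erase i,
            (∫ D, lossFn g lam Astar (r (D i)) (r (D j)) ∂(Measure.pi fun _ : Fin n => P)) := by
      have : f = fun D => (1 / ((n : ℝ) * ((n : ℝ) - 1))) *
          ∑ i, ∑ j ∈ univ.erase i, lossFn g lam Astar (r (D i)) (r (D j)) := rfl
      rw [this, integral_const_mul]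
      congr 1
      rw [integral_finset_sum _ (fun i _ => integrable_finset_sum _ fun j _ =>
        bdd_integrable _ (hpairm i j) (hpairb i j))]
      exact Finset.sum_congr rfl fun i _ => (integral_finset_sum _ fun j _ =>
        bdd_integrable _ (hpairm i j) (hpairb i j))
    rw [h1]
    have h2 : ∀ i : Fin n, ∀ j ∈ univ.erase i,
        (∫ D, lossFn g lam Astar (r (D i)) (r (D j)) ∂(Measure.pi fun _ : Fin n => P))
          = popRisk g lam P Astar := fun i j hj => hIeq i j (Finset.mem_erase.1 hj).1
    rw [Finset.sum_congr rfl fun i _ => Finset.sum_congr rfl fun j hj => h2 i j hj]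
    rw [hsum_const, hinv]
  -- the good set T
  have hTmeas : MeasurableSet {D : Fin n → Pt d L | ∀ i, D i ∈ S} := by
    have : {D : Fin n → Pt d L | ∀ i, D i ∈ S} = Set.pi Set.univ (fun _ => S) := by
      ext D; simp [Set.mem_pi]
    rw [this]
    exact MeasurableSet.univ_pi fun _ => hSm
  have hT1 : (Measure.pi fun _ : Fin n => P) {D | ∀ i, D i ∈ S} = 1 := by
    have : {D : Fin n → Pt d L | ∀ i, D i ∈ S} = Set.pi Set.univ (fun _ => S) := by
      ext D; simp [Set.mem_pi]
    rw [this, Measure.pi_pi]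
    simp [hS1]
  have hTemp : ∀ D : Fin n → Pt d L, (∀ i, D i ∈ S) → empRisk g lam Astar D = f D := by
    intro D hD
    rw [hfdef]; dsimp only
    congr 1
    exact funext fun i => (hrid _ (hD i)).symm
  set E := {D : Fin n → Pt d L | empRisk g lam Astar D - popRisk g lam P Astar ≤ t} with hEdef
  -- show the target
  show ENNReal.ofReal (1 - δ) ≤ (Measure.pi fun _ : Fin n => P) E
  rcases eq_or_lt_of_le hB0 with hBzero | hBpos
  · -- degenerate case: B = 0, f is constant
    have hfc : ∀ D, f D = lam * Astar.trace := by
      intro D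
      have := hfbounds D
      rw [← hBzero] at this
      linarith [this.1, this.2]
    have hpop : popRisk g lam P Astar = lam * Astar.trace := by
      rw [← hmean]
      rw [integral_congr_ae (ae_of_all _ hfc), integral_const]
      simp [measure_univ]
    have hTE : {D : Fin n → Pt d L | ∀ i, D i ∈ S} ⊆ E := by
      intro D hD
      rw [hEdef]
      simp only [Set.mem_setOf_eq]
      rw [hTemp D hD, hfc, hpop]
      simpa using ht0
    calc ENNReal.ofReal (1 - δ) ≤ 1 := ENNReal.ofReal_le_one.2 (by linarith)
      _ = (Measure.pi fun _ : Fin n => P) {D | ∀ i, D i ∈ S} := hT1.symm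
      _ ≤ (Measure.pi fun _ : Fin n => P) E := measure_mono hTE
  · -- main case: B > 0
    have hC2pos : 0 < C2 := by linarith
    have hlogpos : 0 < Real.log (1 / δ) := by
      apply Real.log_pos
      rw [lt_div_iff₀ hδ0]; linarith
    have hargpos : 0 < Real.log (1 / δ) / (2 * n) := div_pos hlogpos (by positivity)
    have htpos : 0 < t := by
      rw [htdef]
      have := Real.sqrt_pos.2 hargpos
      positivity
    set c : ℝ := 2 * B / n with hcdef
    have hcpos : 0 < c := by rw [hcdef]; positivity
    have hdiff' : ∀ D (k : Fin n) x, |f (Function.update D k x) - f D| ≤ c := by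
      intro D k x; rw [hcdef]; exact hdiff D k x
    have htail := mcdiarmid_tail P (by omega : 1 ≤ n) hfm hM hcpos hdiff' htpos
    -- numeric: exp bound ≤ δ
    have ht2 : t ^ 2 = 8 * C2 ^ 2 * Real.log (1 / δ) / n := by
      rw [htdef, mul_pow, mul_pow, Real.sq_sqrt hargnn]
      field_simp
      ring
    have hexple : Real.exp (-2 * t ^ 2 / ((n:ℝ) * c ^ 2)) ≤ δ := by
      have hB2sq : B ^ 2 ≤ 4 * C2 ^ 2 := by nlinarith
      have harg : -2 * t ^ 2 / ((n:ℝ) * c ^ 2) ≤ -Real.log (1 / δ) := by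
        have hnc2 : (n:ℝ) * c ^ 2 = 4 * B ^ 2 / n := by
          rw [hcdef]; field_simp; ring
        rw [hnc2, ht2]
        rw [div_le_iff₀ (by positivity : (0:ℝ) < 4 * B ^ 2 / n)]
        have hexpand : -Real.log (1 / δ) * (4 * B ^ 2 / n)
            = -(4 * B ^ 2 / n * Real.log (1 / δ)) := by ring
        have h48 : -2 * (8 * C2 ^ 2 * Real.log (1 / δ) / n)
            = -(16 * C2 ^ 2 * Real.log (1 / δ) / n) := by ring
        rw [hexpand, h48, neg_le_neg_iff, div_mul_eq_mul_div, div_le_div_iff₀ hn0 hn0]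
        nlinarith [mul_le_mul_of_nonneg_right hB2sq hlogpos.le]
      calc Real.exp (-2 * t ^ 2 / ((n:ℝ) * c ^ 2)) ≤ Real.exp (-Real.log (1 / δ)) :=
            Real.exp_le_exp.2 harg
        _ = δ := by
            rw [Real.exp_neg, Real.exp_log (by positivity)]
            simp
    have hGc : (Measure.pi fun _ : Fin n => P)
        {D | (∫ D', f D' ∂(Measure.pi fun _ : Fin n => P)) + t ≤ f D} ≤ ENNReal.ofReal δ :=
      htail.trans (ENNReal.ofReal_le_ofReal hexple)
    set G := {D : Fin n → Pt d L | f D ≤ (∫ D', f D' ∂(Measure.pi fun _ : Fin n => P)) + t}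
      with hGdef
    have hGmeas : MeasurableSet G := by
      rw [hGdef]
      exact measurableSet_le hfm measurable_const
    have hGcompl : (Measure.pi fun _ : Fin n => P) Gᶜ ≤ ENNReal.ofReal δ := by
      refine le_trans (measure_mono ?_) hGc
      intro D hD
      rw [hGdef] at hD
      simp only [Set.mem_compl_iff, Set.mem_setOf_eq, not_le] at hD
      exact le_of_lt hD
    have hGlb : 1 - ENNReal.ofReal δ ≤ (Measure.pi fun _ : Fin n => P) G := by
      rw [tsub_le_iff_right]
      calc (1 : ℝ≥0∞) = (Measure.pi fun _ : Fin n => P) G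
          + (Measure.pi fun _ : Fin n => P) Gᶜ := by
            rw [measure_add_measure_compl hGmeas]; exact measure_univ.symm
        _ ≤ (Measure.pi fun _ : Fin n => P) G + ENNReal.ofReal δ := by
            gcongr
    have hTc0 : (Measure.pi fun _ : Fin n => P) {D : Fin n → Pt d L | ∀ i, D i ∈ S}ᶜ = 0 := by
      rw [measure_compl hTmeas (measure_ne_top _ _), hT1, measure_univ, tsub_self]
    have hGsub : (Measure.pi fun _ : Fin n => P) G
        ≤ (Measure.pi fun _ : Fin n => P) (G ∩ {D | ∀ i, D i ∈ S}) := by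
      calc (Measure.pi fun _ : Fin n => P) G
          ≤ (Measure.pi fun _ : Fin n => P)
            ((G ∩ {D | ∀ i, D i ∈ S}) ∪ {D : Fin n → Pt d L | ∀ i, D i ∈ S}ᶜ) := by
            apply measure_mono
            intro D hD
            by_cases hDT : ∀ i, D i ∈ S
            · exact Or.inl ⟨hD, hDT⟩
            · exact Or.inr hDT
        _ ≤ (Measure.pi fun _ : Fin n => P) (G ∩ {D | ∀ i, D i ∈ S})
            + (Measure.pi fun _ : Fin n => P) {D : Fin n → Pt d L | ∀ i, D i ∈ S}ᶜ :=
            measure_union_le _ _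
        _ = (Measure.pi fun _ : Fin n => P) (G ∩ {D | ∀ i, D i ∈ S}) := by rw [hTc0, add_zero]
    have hsubE : G ∩ {D : Fin n → Pt d L | ∀ i, D i ∈ S} ⊆ E := by
      rintro D ⟨hDG, hDT⟩
      rw [hEdef]
      simp only [Set.mem_setOf_eq]
      rw [hTemp D hDT, ← hmean]
      rw [hGdef] at hDG
      simp only [Set.mem_setOf_eq] at hDG
      linarith
    have hofReal : ENNReal.ofReal (1 - δ) ≤ 1 - ENNReal.ofReal δ := by
      have hsum : ENNReal.ofReal (1 - δ) + ENNReal.ofReal δ = 1 := by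
        rw [← ENNReal.ofReal_add (by linarith) hδ0.le]
        norm_num
      rw [← hsum]
      rw [ENNReal.add_sub_cancel_right ENNReal.ofReal_ne_top]
    calc ENNReal.ofReal (1 - δ) ≤ 1 - ENNReal.ofReal δ := hofReal
      _ ≤ (Measure.pi fun _ : Fin n => P) G := hGlb
      _ ≤ (Measure.pi fun _ : Fin n => P) (G ∩ {D | ∀ i, D i ∈ S}) := hGsub
      _ ≤ (Measure.pi fun _ : Fin n => P) E := measure_mono hsubE
end
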